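/- For β > -1, n ∈ N, and real ξ with |ξ| < 1, one has ∫_{-1}^1 (1-ξu)^β (1-u^2)^{n-1/2} du = B(1/2, n+1/2) · ₂F₁(-β/2, (1-β)/2; n+1; ξ²). -/

import Mathlib

open MeasureTheory Set

/-- The Gauss hypergeometric function `₂F₁(a,b;c;x)` defined by its power series. -/
noncomputable def hyp2F1 (a b c x : ℝ) : ℝ :=
  ∑' k : ℕ, ((∏ i ∈ Finset.range k, (a + i)) * (∏ i ∈ Finset.range k, (b + i)) /
    ((∏ i ∈ Finset.range k, (c + i)) * (Nat.factorial k))) * x ^ k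

/-! ### Auxiliary lemmas -/

section Binomial

lemma aux_mem_slit {z : ℂ} (hz : z ∈ Metric.ball (0:ℂ) 1) : 1 - z ∈ Complex.slitPlane := by
  rw [Metric.mem_ball, dist_zero_right] at hz
  refine Complex.mem_slitPlane_iff.2 (Or.inl ?_)
  simp only [Complex.sub_re, Complex.one_re]
  have h2 : ‖z‖ < 1 := hz
  have := Complex.abs_re_le_norm z
  simp only [abs_le] at this
  linarith [this.2]

lemma aux_iteratedDeriv_one_sub_cpow (β : ℝ) (k : ℕ) :
    ∀ z ∈ Metric.ball (0:ℂ) 1,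
    iteratedDeriv k (fun w : ℂ => (1 - w) ^ (β:ℂ)) z
      = (∏ i ∈ Finset.range k, (-(β:ℂ) + i)) * (1 - z) ^ ((β:ℂ) - k) := by
  induction k with
  | zero => intro z hz; simp
  | succ k ih =>
    intro z hz
    rw [iteratedDeriv_succ]
    have hev : iteratedDeriv k (fun w : ℂ => (1 - w) ^ (β:ℂ))
        =ᶠ[nhds z] fun z => (∏ i ∈ Finset.range k, (-(β:ℂ) + i)) * (1 - z) ^ ((β:ℂ) - k) := by
      filter_upwards [Metric.isOpen_ball.mem_nhds hz] with w hw using ih w hw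
    rw [hev.deriv_eq]
    have hd : HasDerivAt (fun z : ℂ => (∏ i ∈ Finset.range k, (-(β:ℂ) + i)) * (1 - z) ^ ((β:ℂ) - k))
        ((∏ i ∈ Finset.range k, (-(β:ℂ) + i)) * (((β:ℂ) - k) * (1 - z) ^ ((β:ℂ) - k - 1) * (-1))) z :=
      (((hasDerivAt_id z).const_sub 1).cpow_const (aux_mem_slit hz)).const_mul _
    rw [hd.deriv, Finset.prod_range_succ]
    ring_nf
    rw [show (-1 + (β:ℂ) - k) = (β:ℂ) - ((1 + k : ℕ) : ℂ) by push_cast; ring]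

lemma aux_hasSum_binomial (β : ℝ) {x : ℝ} (hx : |x| < 1) :
    HasSum (fun k : ℕ => (∏ i ∈ Finset.range k, (-β + i)) / (Nat.factorial k) * x ^ k)
      ((1 - x) ^ β) := by
  have hx1 : (x:ℂ) ∈ Metric.ball (0:ℂ) 1 := by
    rw [Metric.mem_ball, dist_zero_right, Complex.norm_real, Real.norm_eq_abs]; exact hx
  have hdiff : DifferentiableOn ℂ (fun w : ℂ => (1 - w) ^ (β:ℂ)) (Metric.ball 0 1) :=
    fun w hw => (((hasDerivAt_id w).const_sub 1).cpow_const
      (aux_mem_slit hw)).differentiableAt.differentiableWithinAt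
  have h0 : (0:ℂ) ∈ Metric.ball (0:ℂ) 1 := by simp
  have H := Complex.hasSum_taylorSeries_on_ball hdiff hx1
  have Hterm : ∀ k : ℕ, (Nat.factorial k : ℂ)⁻¹ • ((x:ℂ) - 0) ^ k •
      iteratedDeriv k (fun w : ℂ => (1 - w) ^ (β:ℂ)) 0
      = (((∏ i ∈ Finset.range k, (-β + i)) / (Nat.factorial k) * x ^ k : ℝ) : ℂ) := by
    intro k
    rw [aux_iteratedDeriv_one_sub_cpow β k 0 h0]
    simp only [sub_zero, smul_eq_mul, Complex.one_cpow]
    push_cast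
    ring
  simp only [Hterm] at H
  have hval : ((1:ℂ) - (x:ℂ)) ^ (β:ℂ) = (((1 - x) ^ β : ℝ) : ℂ) := by
    rw [Complex.ofReal_cpow (by linarith [abs_lt.mp hx] : (0:ℝ) ≤ 1 - x)]
    push_cast
    ring_nf
  rw [hval] at H
  exact Complex.hasSum_ofReal.mp H

end Binomial

section RealBeta

lemma aux_complex_eq_real_beta {s t : ℝ} :
    Set.EqOn (fun x : ℝ => (x:ℂ) ^ ((s:ℂ)-1) * ((1:ℂ)-x) ^ ((t:ℂ)-1))
      (fun x : ℝ => (((x ^ (s-1) * (1-x) ^ (t-1) : ℝ)) : ℂ)) (Set.uIcc 0 1) := by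
  intro x hx
  rw [Set.uIcc_of_le (by norm_num : (0:ℝ) ≤ 1), Set.mem_Icc] at hx
  simp only
  rw [Complex.ofReal_mul, Complex.ofReal_cpow hx.1, Complex.ofReal_cpow (by linarith [hx.2])]
  push_cast
  ring

lemma aux_realBeta_intervalIntegrable {s t : ℝ} (hs : 0 < s) (ht : 0 < t) :
    IntervalIntegrable (fun x : ℝ => x ^ (s-1) * (1-x) ^ (t-1)) volume 0 1 := by
  have h := (Complex.betaIntegral_convergent (u := s) (v := t) (by simpa) (by simpa))
  have hae : (fun x : ℝ => (x:ℂ) ^ ((s:ℂ)-1) * ((1:ℂ)-x) ^ ((t:ℂ)-1))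
      =ᵐ[volume.restrict (Set.uIoc (0:ℝ) 1)]
      (fun x : ℝ => (((x ^ (s-1) * (1-x) ^ (t-1) : ℝ)) : ℂ)) :=
    (ae_restrict_mem measurableSet_uIoc).mono fun x hx =>
      aux_complex_eq_real_beta (Set.uIoc_subset_uIcc hx)
  have h3 := (h.congr_ae hae).norm
  apply h3.congr_ae
  refine (ae_restrict_mem measurableSet_uIoc).mono fun x hx => ?_
  rw [Set.uIoc_of_le (by norm_num : (0:ℝ) ≤ 1), Set.mem_Ioc] at hx
  simp only [Complex.norm_real, Real.norm_eq_abs]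
  rw [abs_of_nonneg (mul_nonneg (Real.rpow_nonneg hx.1.le _)
    (Real.rpow_nonneg (by linarith [hx.2]) _))]

lemma aux_realBeta_eq {s t : ℝ} (hs : 0 < s) (ht : 0 < t) :
    ∫ x in (0:ℝ)..1, x ^ (s-1) * (1-x) ^ (t-1)
      = Real.Gamma s * Real.Gamma t / Real.Gamma (s+t) := by
  have hG : Real.Gamma (s+t) ≠ 0 := (Real.Gamma_pos_of_pos (by linarith)).ne'
  have key := Complex.Gamma_mul_Gamma_eq_betaIntegral
    (s := s) (t := t) (by simpa) (by simpa)
  rw [Complex.betaIntegral,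
    intervalIntegral.integral_congr (aux_complex_eq_real_beta (s := s) (t := t)),
    intervalIntegral.integral_ofReal, ← Complex.ofReal_add,
    Complex.Gamma_ofReal, Complex.Gamma_ofReal, Complex.Gamma_ofReal,
    ← Complex.ofReal_mul, ← Complex.ofReal_mul] at key
  have := Complex.ofReal_inj.mp key
  field_simp
  linarith [this]

lemma aux_beta_Ioo_int {s t : ℝ} (hs : 0 < s) (ht : 0 < t) :
    IntegrableOn (fun x : ℝ => x ^ (s-1) * (1-x) ^ (t-1)) (Set.Ioo 0 1) :=
  (((intervalIntegrable_iff_integrableOn_Ioc_of_le (by norm_num)).mp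
    (aux_realBeta_intervalIntegrable hs ht))).mono_set Set.Ioo_subset_Ioc_self

lemma aux_beta_Ioo_eq {s t : ℝ} (hs : 0 < s) (ht : 0 < t) :
    ∫ x in Set.Ioo (0:ℝ) 1, x ^ (s-1) * (1-x) ^ (t-1)
      = Real.Gamma s * Real.Gamma t / Real.Gamma (s+t) := by
  rw [← integral_Ioc_eq_integral_Ioo,
    ← intervalIntegral.integral_of_le (by norm_num : (0:ℝ) ≤ 1)]
  exact aux_realBeta_eq hs ht

end RealBeta

section Moments

lemma aux_g_meas (α : ℝ) (k : ℕ) : Measurable (fun u : ℝ => u ^ k * (1 - u^2) ^ α) := by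
  fun_prop

lemma aux_sqrt_image : Real.sqrt '' Set.Ioo 0 1 = Set.Ioo 0 1 := by
  ext y; constructor
  · rintro ⟨t, ht, rfl⟩
    exact ⟨Real.sqrt_pos.mpr ht.1, by
      rw [show (1:ℝ) = Real.sqrt 1 by simp]; exact Real.sqrt_lt_sqrt ht.1.le ht.2⟩
  · intro hy
    exact ⟨y^2, ⟨pow_pos hy.1 2, by nlinarith [hy.2, hy.1]⟩, Real.sqrt_sq hy.1.le⟩

lemma aux_sqrt_deriv : ∀ t ∈ Set.Ioo (0:ℝ) 1,
    HasDerivWithinAt Real.sqrt (1 / (2 * Real.sqrt t)) (Set.Ioo (0:ℝ) 1) t :=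
  fun t ht => (Real.hasDerivAt_sqrt ht.1.ne').hasDerivWithinAt

lemma aux_sqrt_injOn : Set.InjOn Real.sqrt (Set.Ioo (0:ℝ) 1) :=
  fun x hx y hy h => (Real.sqrt_inj hx.1.le hy.1.le).mp h

lemma aux_integrand_eq (α : ℝ) (m : ℕ) : ∀ t ∈ Set.Ioo (0:ℝ) 1,
    |1 / (2 * Real.sqrt t)| • ((Real.sqrt t) ^ (2*m) * (1 - (Real.sqrt t)^2) ^ α)
      = (1/2) * (t ^ ((m:ℝ) + 1/2 - 1) * (1 - t) ^ α) := by
  intro t ht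
  have h0 : (0:ℝ) < Real.sqrt t := Real.sqrt_pos.mpr ht.1
  rw [Real.sq_sqrt ht.1.le, smul_eq_mul, abs_of_pos (by positivity)]
  rw [show Real.sqrt t ^ (2*m) = t ^ m by
    rw [pow_mul, Real.sq_sqrt ht.1.le]]
  have h1 : t ^ ((m:ℝ)+1/2-1) = t ^ (m:ℕ) / Real.sqrt t := by
    rw [Real.sqrt_eq_rpow, ← Real.rpow_natCast t m, ← Real.rpow_sub ht.1]
    congr 1
    ring
  rw [h1]
  field_simp

lemma aux_mom_intOn {α : ℝ} (hα : -1 < α) (m : ℕ) :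
    IntegrableOn (fun u : ℝ => u ^ (2*m) * (1 - u^2) ^ α) (Set.Ioo 0 1) := by
  rw [← aux_sqrt_image, integrableOn_image_iff_integrableOn_abs_deriv_smul measurableSet_Ioo
    aux_sqrt_deriv aux_sqrt_injOn]
  have hint : IntegrableOn
      (fun t : ℝ => (1/2) * (t ^ ((m:ℝ) + 1/2 - 1) * (1 - t) ^ ((α+1) - 1))) (Set.Ioo 0 1) :=
    ((aux_beta_Ioo_int (by positivity : (0:ℝ) < (m:ℝ) + 1/2)
      (by linarith : (0:ℝ) < α + 1)).const_mul _)
  simp only [add_sub_cancel_right] at hint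
  exact hint.congr_fun (fun t ht => (aux_integrand_eq α m t ht).symm) measurableSet_Ioo

lemma aux_mom_val {α : ℝ} (hα : -1 < α) (m : ℕ) :
    ∫ u in Set.Ioo (0:ℝ) 1, u ^ (2*m) * (1 - u^2) ^ α
      = (1/2) * (Real.Gamma ((m:ℝ) + 1/2) * Real.Gamma (α+1)
          / Real.Gamma ((m:ℝ) + 1/2 + (α+1))) := by
  rw [← aux_sqrt_image, integral_image_eq_integral_abs_deriv_smul measurableSet_Ioo
    aux_sqrt_deriv aux_sqrt_injOn,
    setIntegral_congr_fun measurableSet_Ioo (aux_integrand_eq α m),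
    integral_const_mul]
  have := aux_beta_Ioo_eq (s := (m:ℝ) + 1/2) (t := α + 1)
    (by positivity) (by linarith)
  simp only [add_sub_cancel_right] at this
  rw [this]

lemma aux_neg_image : Neg.neg '' Set.Ioo (0:ℝ) 1 = Set.Ioo (-1) 0 := by
  ext x
  constructor
  · rintro ⟨t, ht, rfl⟩; exact ⟨by linarith [ht.2], by linarith [ht.1]⟩
  · intro hx; exact ⟨-x, ⟨by linarith [hx.2], by linarith [hx.1]⟩, by ring⟩

lemma aux_neg_cov (g : ℝ → ℝ) :
    ∫ u in Set.Ioo (-1:ℝ) 0, g u = ∫ x in Set.Ioo (0:ℝ) 1, g (-x) := by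
  rw [← aux_neg_image, integral_image_eq_integral_abs_deriv_smul measurableSet_Ioo
    (fun x _ => (hasDerivAt_neg x).hasDerivWithinAt) neg_injective.injOn]
  simp

lemma aux_neg_cov_integrable (g : ℝ → ℝ) :
    IntegrableOn (fun u => g u) (Set.Ioo (-1:ℝ) 0) ↔
      IntegrableOn (fun x => g (-x)) (Set.Ioo (0:ℝ) 1) := by
  rw [← aux_neg_image, integrableOn_image_iff_integrableOn_abs_deriv_smul measurableSet_Ioo
    (fun x _ => (hasDerivAt_neg x).hasDerivWithinAt) neg_injective.injOn]
  simp [IntegrableOn]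

lemma aux_null_points : (volume : Measure ℝ) ({-1, 0, 1} : Set ℝ) = 0 :=
  Set.Countable.measure_zero (Set.to_countable _) _

lemma aux_cover : Set.Icc (-1:ℝ) 1 ⊆ (Set.Ioo (-1) 0 ∪ Set.Ioo 0 1) ∪ {-1, 0, 1} := by
  intro x hx
  rcases eq_or_ne x (-1) with h | h1
  · exact Or.inr (by simp [h])
  rcases eq_or_ne x 0 with h | h2
  · exact Or.inr (by simp [h])
  rcases eq_or_ne x 1 with h | h3
  · exact Or.inr (by simp [h])
  rcases lt_or_gt_of_ne h2 with h | h
  · exact Or.inl (Or.inl ⟨lt_of_le_of_ne hx.1 (Ne.symm h1), h⟩)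
  · exact Or.inl (Or.inr ⟨h, lt_of_le_of_ne hx.2 h3⟩)

lemma aux_icc_ae : (Set.Icc (-1:ℝ) 1 : Set ℝ) =ᵐ[volume] ((Set.Ioo (-1) 0 ∪ Set.Ioo 0 1 : Set ℝ)) := by
  rw [MeasureTheory.ae_eq_set]
  constructor
  · refine measure_mono_null (fun x hx => ?_) aux_null_points
    rcases aux_cover hx.1 with h | h
    · exact absurd h hx.2
    · exact h
  · refine measure_mono_null (fun x hx => ?_) (measure_empty (μ := volume))
    rcases hx.1 with h | h
    · exact absurd ⟨by linarith [h.1], by linarith [h.2]⟩ hx.2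
    · exact absurd ⟨by linarith [h.1], by linarith [h.2]⟩ hx.2

lemma aux_base_int_Icc {α : ℝ} (hα : -1 < α) :
    IntegrableOn (fun u : ℝ => (1 - u^2) ^ α) (Set.Icc (-1) 1) := by
  have p2 : IntegrableOn (fun u : ℝ => (1 - u^2) ^ α) (Set.Ioo 0 1) := by
    have := aux_mom_intOn hα 0
    simpa using this
  have p1 : IntegrableOn (fun u : ℝ => (1 - u^2) ^ α) (Set.Ioo (-1) 0) := by
    rw [aux_neg_cov_integrable]
    simpa using p2
  have p3 : IntegrableOn (fun u : ℝ => (1 - u^2) ^ α) ({-1, 0, 1} : Set ℝ) := by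
    rw [IntegrableOn, Measure.restrict_eq_zero.mpr aux_null_points]
    exact integrable_zero_measure
  exact ((p1.union p2).union p3).mono_set aux_cover

lemma aux_fk_int_Icc {α : ℝ} (hα : -1 < α) (k : ℕ) :
    IntegrableOn (fun u : ℝ => u ^ k * (1 - u^2) ^ α) (Set.Icc (-1) 1) := by
  refine Integrable.mono (aux_base_int_Icc hα) ((aux_g_meas α k).aestronglyMeasurable) ?_
  refine (ae_restrict_mem measurableSet_Icc).mono fun u hu => ?_
  have h1 : (0:ℝ) ≤ 1 - u^2 := by nlinarith [hu.1, hu.2]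
  have h2 : |u| ≤ 1 := abs_le.mpr ⟨hu.1, hu.2⟩
  rw [Real.norm_eq_abs, Real.norm_eq_abs, abs_mul, abs_of_nonneg (Real.rpow_nonneg h1 α),
    abs_pow]
  nlinarith [pow_le_one₀ (abs_nonneg u) h2 (n := k), Real.rpow_nonneg h1 α,
    pow_nonneg (abs_nonneg u) k]

lemma aux_moment_Icc {α : ℝ} (hα : -1 < α) (k : ℕ) :
    ∫ u in Set.Icc (-1:ℝ) 1, u ^ k * (1 - u^2) ^ α
      = (1 + (-1:ℝ)^k) * ∫ u in Set.Ioo (0:ℝ) 1, u ^ k * (1 - u^2) ^ α := by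
  rw [setIntegral_congr_set aux_icc_ae]
  have hdisj : Disjoint (Set.Ioo (-1:ℝ) 0) (Set.Ioo 0 1) := by
    rw [Set.disjoint_left]
    rintro x ⟨_, h2⟩ ⟨h3, _⟩
    linarith
  have hint := aux_fk_int_Icc hα k
  rw [setIntegral_union hdisj measurableSet_Ioo
    (hint.mono_set (fun x hx => ⟨by linarith [hx.1], by linarith [hx.2]⟩))
    (hint.mono_set (fun x hx => ⟨by linarith [hx.1], by linarith [hx.2]⟩))]
  rw [aux_neg_cov (fun u => u ^ k * (1 - u^2) ^ α)]
  have : ∀ x : ℝ, (-x) ^ k * (1 - (-x)^2) ^ α = (-1)^k * (x ^ k * (1 - x^2) ^ α) := by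
    intro x
    rw [neg_pow, neg_sq]
    ring
  simp_rw [this]
  rw [integral_const_mul]
  ring

end Moments

section GammaPoch

lemma aux_Gamma_shift (x : ℝ) (hx : 0 < x) (m : ℕ) :
    Real.Gamma (x + m) = Real.Gamma x * ∏ i ∈ Finset.range m, (x + i) := by
  induction m with
  | zero => simp
  | succ m ih =>
    have : x + (m + 1 : ℕ) = (x + m) + 1 := by push_cast; ring
    rw [this, Real.Gamma_add_one (by positivity), ih, Finset.prod_range_succ]
    push_cast
    ring

lemma aux_poch_double (a : ℝ) (m : ℕ) :
    ∏ i ∈ Finset.range (2*m), (a + i)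
      = 4^m * (∏ i ∈ Finset.range m, (a/2 + i)) * (∏ i ∈ Finset.range m, ((a+1)/2 + i)) := by
  induction m with
  | zero => simp
  | succ m ih =>
    rw [show 2*(m+1) = 2*m+1+1 by ring, Finset.prod_range_succ, Finset.prod_range_succ, ih,
      Finset.prod_range_succ, Finset.prod_range_succ]
    push_cast
    ring

lemma aux_fact_double (m : ℕ) :
    ((2*m).factorial : ℝ) = 4^m * (m.factorial : ℝ) * ∏ i ∈ Finset.range m, ((1:ℝ)/2 + i) := by
  induction m with
  | zero => simp
  | succ m ih =>
    rw [show 2*(m+1) = 2*m+1+1 by ring, Nat.factorial_succ, Nat.factorial_succ,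
      Nat.factorial_succ, Finset.prod_range_succ]
    push_cast [ih]
    ring

lemma aux_poch_pos (x : ℝ) (hx : 0 < x) (m : ℕ) : 0 < ∏ i ∈ Finset.range m, (x + i) :=
  Finset.prod_pos fun i _ => by positivity

lemma aux_term_eq (β : ℝ) (n m : ℕ) :
    (∏ i ∈ Finset.range (2*m), (-β + i)) / ((2*m).factorial : ℝ)
        * (Real.Gamma ((m:ℝ)+1/2) * Real.Gamma ((n:ℝ)+1/2)
            / Real.Gamma ((m:ℝ) + 1/2 + ((n:ℝ) + 1/2)))
      = (Real.Gamma (1/2) * Real.Gamma ((n:ℝ)+1/2) / Real.Gamma ((n:ℝ)+1))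
        * ((∏ i ∈ Finset.range m, (-β/2 + i)) * (∏ i ∈ Finset.range m, ((1-β)/2 + i)) /
            ((∏ i ∈ Finset.range m, ((n:ℝ)+1 + i)) * (Nat.factorial m))) := by
  have e1 : Real.Gamma ((m:ℝ)+1/2) = Real.Gamma (1/2) * ∏ i ∈ Finset.range m, ((1:ℝ)/2 + i) := by
    rw [← aux_Gamma_shift (1/2) (by norm_num) m]
    congr 1
    ring
  have e2 : Real.Gamma ((m:ℝ) + 1/2 + ((n:ℝ) + 1/2))
      = Real.Gamma ((n:ℝ)+1) * ∏ i ∈ Finset.range m, ((n:ℝ)+1 + i) := by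
    rw [← aux_Gamma_shift ((n:ℝ)+1) (by positivity) m]
    congr 1
    ring
  have e3 := aux_poch_double (-β) m
  have e4 := aux_fact_double m
  have h1 : (0:ℝ) < ∏ i ∈ Finset.range m, ((1:ℝ)/2 + i) := aux_poch_pos _ (by norm_num) m
  have h2 : (0:ℝ) < ∏ i ∈ Finset.range m, ((n:ℝ)+1 + i) := aux_poch_pos _ (by positivity) m
  have h3 : (0:ℝ) < (m.factorial : ℝ) := by exact_mod_cast m.factorial_pos
  have h4 : (0:ℝ) < Real.Gamma ((n:ℝ)+1) := Real.Gamma_pos_of_pos (by positivity)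
  have h5 : (0:ℝ) < (4:ℝ)^m := by positivity
  have e5 : ∏ i ∈ Finset.range m, (-β/2 + i) = ∏ i ∈ Finset.range m, (-β/2 + i) := rfl
  rw [e1, e2, e3, e4]
  have hb : (-β)/2 = -β/2 := by ring
  have hb2 : ((-β)+1)/2 = (1-β)/2 := by ring
  rw [hb, hb2]
  field_simp

end GammaPoch

/-- For `β > -1`, `n ∈ ℕ`, and real `ξ` with `|ξ| < 1`,
`∫_{-1}^1 (1-ξu)^β (1-u²)^{n-1/2} du = B(1/2, n+1/2) ₂F₁(-β/2, (1-β)/2; n+1; ξ²)`,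
where `B(x,y) = Γ(x)Γ(y)/Γ(x+y)`. -/
theorem integral_eq_beta_hypergeometric (β : ℝ) (hβ : -1 < β) (n : ℕ)
    (ξ : ℝ) (hξ : |ξ| < 1) :
    (∫ u in Set.Icc (-1 : ℝ) 1,
        (1 - ξ * u) ^ β * (1 - u ^ 2) ^ ((n : ℝ) - 1 / 2)) =
      (Real.Gamma (1 / 2) * Real.Gamma ((n : ℝ) + 1 / 2) /
          Real.Gamma ((n : ℝ) + 1)) *
        hyp2F1 (-β / 2) ((1 - β) / 2) ((n : ℝ) + 1) (ξ ^ 2) := by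
  set α : ℝ := (n : ℝ) - 1/2 with hα_def
  have hα : -1 < α := by
    have : (0:ℝ) ≤ (n:ℝ) := Nat.cast_nonneg n
    rw [hα_def]; linarith
  set a : ℕ → ℝ := fun k => (∏ i ∈ Finset.range k, (-β + i)) / (Nat.factorial k) with ha_def
  set F : ℕ → ℝ → ℝ := fun k u => (a k * ξ ^ k) * (u ^ k * (1 - u^2) ^ α) with hF_def
  -- pointwise expansion
  have hexp : ∀ u ∈ Set.Icc (-1:ℝ) 1,
      HasSum (fun k => F k u) ((1 - ξ * u) ^ β * (1 - u^2) ^ α) := by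
    intro u hu
    have hxu : |ξ * u| < 1 := by
      rw [abs_mul]
      calc |ξ| * |u| ≤ |ξ| * 1 := by
            exact mul_le_mul_of_nonneg_left (abs_le.mpr ⟨hu.1, hu.2⟩) (abs_nonneg ξ)
        _ = |ξ| := mul_one _
        _ < 1 := hξ
    have := (aux_hasSum_binomial β hxu).mul_right ((1 - u^2) ^ α)
    refine this.congr_fun fun k => ?_
    rw [hF_def, ha_def]
    simp only [mul_pow]
    ring
  -- summability of coefficients
  have habs : Summable (fun k => |a k * ξ ^ k|) := by
    have hmaj := (aux_hasSum_binomial (β := -|β|) (x := |ξ|) (by rwa [abs_abs])).summable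
    simp only [neg_neg] at hmaj
    refine Summable.of_nonneg_of_le (fun k => abs_nonneg _) (fun k => ?_) hmaj
    rw [abs_mul, abs_pow]
    gcongr
    rw [ha_def]
    simp only
    rw [abs_div, abs_of_pos (by exact_mod_cast k.factorial_pos : (0:ℝ) < (k.factorial:ℝ))]
    gcongr
    rw [Finset.abs_prod]
    refine Finset.prod_le_prod (fun i _ => abs_nonneg _) (fun i _ => ?_)
    refine (abs_add_le _ _).trans ?_
    simp [abs_neg, Nat.abs_cast]
  -- integrability of each term and summability of integral norms
  have hFint : ∀ k, Integrable (F k) (volume.restrict (Set.Icc (-1:ℝ) 1)) := by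
    intro k
    exact ((aux_fk_int_Icc hα k).const_mul (a k * ξ ^ k))
  have hC := aux_base_int_Icc hα
  have hnorm_bound : ∀ k, (∫ u in Set.Icc (-1:ℝ) 1, ‖F k u‖)
      ≤ |a k * ξ ^ k| * ∫ u in Set.Icc (-1:ℝ) 1, (1 - u^2) ^ α := by
    intro k
    rw [← integral_const_mul]
    refine integral_mono_of_nonneg (Filter.Eventually.of_forall fun u => norm_nonneg _)
      (hC.const_mul _) ?_
    refine (ae_restrict_mem measurableSet_Icc).mono fun u hu => ?_
    have h1 : (0:ℝ) ≤ 1 - u^2 := by nlinarith [hu.1, hu.2]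
    have h2 : |u| ≤ 1 := abs_le.mpr ⟨hu.1, hu.2⟩
    simp only [hF_def, Real.norm_eq_abs]
    rw [abs_mul]
    gcongr
    rw [abs_mul, abs_of_nonneg (Real.rpow_nonneg h1 α), abs_pow]
    have h3 : |u| ^ k ≤ 1 := pow_le_one₀ (abs_nonneg u) h2
    nlinarith [Real.rpow_nonneg h1 α, pow_nonneg (abs_nonneg u) k]
  have hsum_norm : Summable fun k => ∫ u in Set.Icc (-1:ℝ) 1, ‖F k u‖ := by
    refine Summable.of_nonneg_of_le
      (fun k => integral_nonneg fun u => norm_nonneg _)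
      hnorm_bound
      (habs.mul_right _)
  -- interchange
  have hinterchange := MeasureTheory.integral_tsum_of_summable_integral_norm hFint hsum_norm
  have hLHS : (∫ u in Set.Icc (-1:ℝ) 1, (1 - ξ * u) ^ β * (1 - u^2) ^ α)
      = ∑' k, ∫ u in Set.Icc (-1:ℝ) 1, F k u := by
    rw [setIntegral_congr_fun measurableSet_Icc
      (fun u hu => ((hexp u hu).tsum_eq).symm : Set.EqOn _ _ _), ← hinterchange]
  -- evaluate each integral
  have hterm : ∀ k, (∫ u in Set.Icc (-1:ℝ) 1, F k u)
      = (a k * ξ ^ k) * ((1 + (-1:ℝ)^k) * ∫ u in Set.Ioo (0:ℝ) 1, u ^ k * (1 - u^2) ^ α) := by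
    intro k
    rw [hF_def]
    simp only
    rw [integral_const_mul, aux_moment_Icc hα k]
  -- restrict to even indices
  set g : ℕ → ℝ := fun k => ∫ u in Set.Icc (-1:ℝ) 1, F k u with hg_def
  have hodd : ∀ k, k ∉ Set.range (fun m : ℕ => 2 * m) → g k = 0 := by
    intro k hk
    have hko : ¬ Even k := by
      intro ⟨m, hm⟩
      exact hk ⟨m, by simp; omega⟩
    rw [hg_def]
    simp only
    rw [hterm k, Odd.neg_one_pow (Nat.not_even_iff_odd.mp hko)]
    ring
  have hinj : Function.Injective (fun m : ℕ => 2 * m) := fun a b h => by simp only at h; omega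
  have heven_sum : ∑' m : ℕ, g (2 * m) = ∑' k, g k :=
    hinj.tsum_eq (fun k hk => by by_contra hr; exact hk (hodd k hr))
  -- compute even terms
  have hterm_even : ∀ m : ℕ, g (2 * m)
      = (Real.Gamma (1/2) * Real.Gamma ((n:ℝ)+1/2) / Real.Gamma ((n:ℝ)+1))
        * (((∏ i ∈ Finset.range m, (-β/2 + i)) * (∏ i ∈ Finset.range m, ((1-β)/2 + i)) /
            ((∏ i ∈ Finset.range m, ((n:ℝ)+1 + i)) * (Nat.factorial m))) * (ξ^2) ^ m) := by
    intro m
    rw [hg_def]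
    simp only
    rw [hterm (2*m), aux_mom_val hα m]
    have h1 : (1 + (-1:ℝ)^(2*m)) = 2 := by
      rw [pow_mul]
      norm_num
    have h2 : α + 1 = (n:ℝ) + 1/2 := by rw [hα_def]; ring
    rw [h1, h2]
    have h3 : ξ ^ (2*m) = (ξ^2)^m := by rw [pow_mul]
    have := aux_term_eq β n m
    rw [ha_def]
    simp only
    calc (∏ i ∈ Finset.range (2*m), (-β + i)) / ((2*m).factorial : ℝ) * ξ ^ (2*m)
          * (2 * ((1/2) * (Real.Gamma ((m:ℝ)+1/2) * Real.Gamma ((n:ℝ)+1/2)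
            / Real.Gamma ((m:ℝ) + 1/2 + ((n:ℝ) + 1/2)))))
        = ((∏ i ∈ Finset.range (2*m), (-β + i)) / ((2*m).factorial : ℝ)
            * (Real.Gamma ((m:ℝ)+1/2) * Real.Gamma ((n:ℝ)+1/2)
              / Real.Gamma ((m:ℝ) + 1/2 + ((n:ℝ) + 1/2)))) * (ξ^2)^m := by
          rw [← h3]; ring
      _ = _ := by rw [this]; ring
  -- assemble
  rw [show (∫ u in Set.Icc (-1 : ℝ) 1, (1 - ξ * u) ^ β * (1 - u ^ 2) ^ ((n : ℝ) - 1 / 2))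
      = ∫ u in Set.Icc (-1:ℝ) 1, (1 - ξ * u) ^ β * (1 - u^2) ^ α from rfl]
  rw [hLHS, ← heven_sum]
  simp_rw [hterm_even]
  rw [tsum_mul_left, hyp2F1]
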